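/- Let s > 1 and let G ≤ Aut(T) be an s-split, self-similar group acting spherically transitively. Then the abelianisation of the s-th Basilica group satisfies Bas_s(G)^{ab} ≅ G^s (the direct product of s copies of G). -/

import Mathlib

/-!
Groups of automorphisms of the `m`-regular rooted tree, encoded via portraits:
an automorphism is determined by the family of its labels (local actions)
`label : List (Fin m) → Equiv.Perm (Fin m)`.
-/

namespace Basilica

/-- An automorphism of the `m`-regular rooted tree, given by its portrait. -/
structure TreeAut (m : ℕ) where
  label : List (Fin m) → Equiv.Perm (Fin m)

namespace TreeAut

variable {m : ℕ}

lemma ext_label {a b : TreeAut m} (h : ∀ u, a.label u = b.label u) : a = b := by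
  cases a
  cases b
  simp only [mk.injEq]
  exact funext h

/-- The section of an automorphism at a vertex. -/
def sec (a : TreeAut m) (v : List (Fin m)) : TreeAut m := ⟨fun u => a.label (v ++ u)⟩

@[simp] lemma sec_label (a : TreeAut m) (v u : List (Fin m)) :
    (a.sec v).label u = a.label (v ++ u) := rfl

@[simp] lemma sec_nil (a : TreeAut m) : a.sec [] = a := rfl

lemma sec_sec (a : TreeAut m) (v w : List (Fin m)) : (a.sec v).sec w = a.sec (v ++ w) :=
  ext_label fun u => by simp [List.append_assoc]

/-- The action of a tree automorphism on the vertices (finite words). -/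
def apply : TreeAut m → List (Fin m) → List (Fin m)
  | _, [] => []
  | a, x :: u => a.label [] x :: (a.sec [x]).apply u

/-- The inverse action of a tree automorphism on the vertices. -/
def invApply : TreeAut m → List (Fin m) → List (Fin m)
  | _, [] => []
  | a, x :: u => (a.label [])⁻¹ x :: (a.sec [(a.label [])⁻¹ x]).invApply u

instance : One (TreeAut m) := ⟨⟨fun _ => 1⟩⟩
instance : Mul (TreeAut m) := ⟨fun a b => ⟨fun u => a.label (b.apply u) * b.label u⟩⟩
instance : Inv (TreeAut m) := ⟨fun a => ⟨fun u => (a.label (a.invApply u))⁻¹⟩⟩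

@[simp] lemma one_label (u : List (Fin m)) : (1 : TreeAut m).label u = 1 := rfl

@[simp] lemma mul_label (a b : TreeAut m) (u : List (Fin m)) :
    (a * b).label u = a.label (b.apply u) * b.label u := rfl

@[simp] lemma inv_label (a : TreeAut m) (u : List (Fin m)) :
    a⁻¹.label u = (a.label (a.invApply u))⁻¹ := rfl

@[simp] lemma one_sec (v : List (Fin m)) : (1 : TreeAut m).sec v = 1 := rfl

@[simp] lemma apply_nil (a : TreeAut m) : a.apply [] = [] := rfl

lemma apply_cons (a : TreeAut m) (x : Fin m) (u : List (Fin m)) :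
    a.apply (x :: u) = a.label [] x :: (a.sec [x]).apply u := rfl

@[simp] lemma one_apply (u : List (Fin m)) : (1 : TreeAut m).apply u = u := by
  induction u with
  | nil => rfl
  | cons x u ih => simp [apply_cons, ih]

lemma apply_append (a : TreeAut m) (v u : List (Fin m)) :
    a.apply (v ++ u) = a.apply v ++ (a.sec v).apply u := by
  induction v generalizing a with
  | nil => simp
  | cons x v ih =>
      simp only [List.cons_append, apply_cons, ih, sec_sec, List.singleton_append,
        List.nil_append]

lemma mul_sec (a b : TreeAut m) (v : List (Fin m)) :
    (a * b).sec v = a.sec (b.apply v) * b.sec v :=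
  ext_label fun u => by simp [apply_append]

lemma mul_apply (a b : TreeAut m) (u : List (Fin m)) :
    (a * b).apply u = a.apply (b.apply u) := by
  induction u generalizing a b with
  | nil => rfl
  | cons x u ih =>
      rw [apply_cons, mul_sec, ih]
      simp [apply_cons, Equiv.Perm.mul_apply]

lemma invApply_apply (a : TreeAut m) (u : List (Fin m)) : a.invApply (a.apply u) = u := by
  induction u generalizing a with
  | nil => rfl
  | cons x u ih => simp [apply_cons, invApply, ih]

lemma apply_invApply (a : TreeAut m) (u : List (Fin m)) : a.apply (a.invApply u) = u := by
  induction u generalizing a with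
  | nil => rfl
  | cons x u ih => simp [invApply, apply_cons, ih]

instance : Group (TreeAut m) where
  mul_assoc a b c := ext_label fun u => by simp [mul_apply, mul_assoc]
  one_mul a := ext_label fun u => by simp
  mul_one a := ext_label fun u => by simp
  inv_mul_cancel a := ext_label fun u => by simp [invApply_apply]

lemma apply_injective (a : TreeAut m) : Function.Injective a.apply := by
  intro x y h
  have hx := invApply_apply a x
  rw [h, invApply_apply] at hx
  exact hx.symm

@[simp] lemma apply_length (a : TreeAut m) (u : List (Fin m)) :
    (a.apply u).length = u.length := by
  induction u generalizing a with
  | nil => rfl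
  | cons x u ih => simp [apply_cons, ih]

/-- `cons ρ f` is `ρ · ψ₁⁻¹(f 0, …, f (m-1))`: the automorphism with root label `ρ`
and first-layer sections `f x`. -/
def cons (ρ : Equiv.Perm (Fin m)) (f : Fin m → TreeAut m) : TreeAut m :=
  ⟨fun u =>
    match u with
    | [] => ρ
    | x :: v => (f x).label v⟩

end TreeAut

variable {m : ℕ}

/-- The `n`-th layer stabiliser `St_G(n)` of a group `G` of tree automorphisms. -/
def layerStab (G : Subgroup (TreeAut m)) (n : ℕ) : Subgroup (TreeAut m) where
  carrier := {g | g ∈ G ∧ ∀ u : List (Fin m), u.length = n → g.apply u = u}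
  one_mem' := ⟨G.one_mem, fun u _ => TreeAut.one_apply u⟩
  mul_mem' := by
    rintro a b ⟨haG, ha⟩ ⟨hbG, hb⟩
    refine ⟨G.mul_mem haG hbG, fun u hu => ?_⟩
    rw [TreeAut.mul_apply, hb u hu, ha u hu]
  inv_mem' := by
    rintro a ⟨haG, ha⟩
    refine ⟨G.inv_mem haG, fun u hu => ?_⟩
    apply TreeAut.apply_injective a
    rw [← TreeAut.mul_apply, mul_inv_cancel, TreeAut.one_apply, ha u hu]

/-- A group of tree automorphisms acts spherically transitively if it acts
transitively on every layer. -/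
def SphericallyTransitive (G : Subgroup (TreeAut m)) : Prop :=
  ∀ u v : List (Fin m), u.length = v.length → ∃ g ∈ G, g.apply u = v

/-- A group of tree automorphisms is self-similar if it is closed under sections. -/
def SelfSimilar (G : Subgroup (TreeAut m)) : Prop :=
  ∀ g ∈ G, ∀ v : List (Fin m), g.sec v ∈ G

/-- A spherically transitive group is fractal if `st_G(u)|_u = G` for all vertices `u`. -/
def Fractal (G : Subgroup (TreeAut m)) : Prop :=
  SphericallyTransitive G ∧
    ∀ u : List (Fin m),
      {h : TreeAut m | ∃ g ∈ G, g.apply u = u ∧ g.sec u = h} = (G : Set (TreeAut m))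

/-- A spherically transitive group is strongly fractal if `St_G(1)|_x = G` for all `x ∈ X`. -/
def StronglyFractal (G : Subgroup (TreeAut m)) : Prop :=
  SphericallyTransitive G ∧
    ∀ x : Fin m,
      {h : TreeAut m | ∃ g ∈ layerStab G 1, g.sec [x] = h} = (G : Set (TreeAut m))

/-- A spherically transitive group is very strongly fractal if
`St_G(n+1)|_x = St_G(n)` for all `n` and `x ∈ X`. -/
def VeryStronglyFractal (G : Subgroup (TreeAut m)) : Prop :=
  SphericallyTransitive G ∧
    ∀ (n : ℕ) (x : Fin m),
      {h : TreeAut m | ∃ g ∈ layerStab G (n + 1), g.sec [x] = h}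
        = (layerStab G n : Set (TreeAut m))

/-- A group of tree automorphisms is contracting if it has a finite nucleus. -/
def Contracting (G : Subgroup (TreeAut m)) : Prop :=
  ∃ N : Set (TreeAut m), N.Finite ∧ N ⊆ (G : Set (TreeAut m)) ∧
    ∀ g ∈ G, ∃ k : ℕ, ∀ v : List (Fin m), k < v.length → g.sec v ∈ N

/-- A tree automorphism is finite-state if it has finitely many distinct sections. -/
def FiniteState (f : TreeAut m) : Prop :=
  {h : TreeAut m | ∃ u : List (Fin m), f.sec u = h}.Finite

/-- A tree automorphism is bounded if the number of nontrivial sections at the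
`n`-th layer is bounded uniformly in `n`. -/
def BoundedAut (f : TreeAut m) : Prop :=
  ∃ C : ℕ, ∀ n : ℕ, {u : List (Fin m) | u.length = n ∧ f.sec u ≠ 1}.ncard ≤ C

/-- The `n`-th rigid layer stabiliser: the subgroup generated by the rigid vertex
stabilisers of the vertices of the `n`-th layer. -/
def rigidLayerStab (G : Subgroup (TreeAut m)) (n : ℕ) : Subgroup (TreeAut m) :=
  Subgroup.closure {g | g ∈ G ∧ ∃ v : List (Fin m), v.length = n ∧
    ∀ u : List (Fin m), ¬ v <+: u → g.apply u = u}

/-- A weakly branch group: spherically transitive with nontrivial rigid layer stabilisers. -/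
def WeaklyBranch (G : Subgroup (TreeAut m)) : Prop :=
  SphericallyTransitive G ∧ ∀ n : ℕ, rigidLayerStab G n ≠ ⊥

/-- `H` is weakly regular branch over `K ≤ H` if `ψ₁(St_K(1)) ⊇ K × ⋯ × K`. -/
def WeaklyRegularBranchOver (H K : Subgroup (TreeAut m)) : Prop :=
  K ≤ H ∧ ∀ f : Fin m → TreeAut m, (∀ x, f x ∈ K) → TreeAut.cons 1 f ∈ K

/-- The portrait of the `i`-th Basilica monomorphism `β^s_i` applied to `g`,
computed by recursion over vertices. -/
def betaLabel [NeZero m] (s : ℕ) : List (Fin m) → ℕ → TreeAut m → Equiv.Perm (Fin m)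
  | [], i, g => if i = 0 then g.label [] else 1
  | x :: u, i, g =>
      if i = 0 then betaLabel s u (s - 1) (g.sec [x])
      else if x = 0 then betaLabel s u (i - 1) g else 1

/-- The Basilica monomorphism `β^s_i : Aut(T) → Aut(T)`, satisfying
`β_i(g) = ψ₁⁻¹(β_{i-1}(g), 1, …, 1)` for `1 ≤ i ≤ s-1` and
`β_0(g) = g|^ε · ψ₁⁻¹(β_{s-1}(g|_0), …, β_{s-1}(g|_{m-1}))`. -/
def betaAut [NeZero m] (s i : ℕ) (g : TreeAut m) : TreeAut m := ⟨fun u => betaLabel s u i g⟩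

/-- The `s`-th Basilica group of `G`. -/
def basilica [NeZero m] (s : ℕ) (G : Subgroup (TreeAut m)) : Subgroup (TreeAut m) :=
  Subgroup.closure {b | ∃ g ∈ G, ∃ i < s, b = betaAut s i g}

/-- The subgroup `S_i = ⟨β_j(G) : j ≠ i⟩` of the `s`-th Basilica group. -/
def Ssub [NeZero m] (s i : ℕ) (G : Subgroup (TreeAut m)) : Subgroup (TreeAut m) :=
  Subgroup.closure {b | ∃ g ∈ G, ∃ j < s, j ≠ i ∧ b = betaAut s j g}

/-- The normal closure `N_i` of `S_i` in the `s`-th Basilica group of `G`. -/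
def Nsub [NeZero m] (s i : ℕ) (G : Subgroup (TreeAut m)) : Subgroup (TreeAut m) :=
  Subgroup.closure {x | ∃ b ∈ basilica s G, ∃ y ∈ Ssub s i G, x = b * y * b⁻¹}

/-- The `i`-th splitting kernel `K_i = β_i⁻¹(β_i(G) ∩ N_i)` of `G`, as a set. -/
def Kset [NeZero m] (s i : ℕ) (G : Subgroup (TreeAut m)) : Set (TreeAut m) :=
  {g | g ∈ G ∧ betaAut s i g ∈ Nsub s i G}

/-- The portrait of the monomorphism `π_i` (for the `d`-fold diagonal construction). -/
def piLabel (d : ℕ) : List (Fin m) → ℕ → TreeAut m → Equiv.Perm (Fin m)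
  | [], i, g => if i = 0 then g.label [] else 1
  | x :: u, i, g =>
      if i = 0 then piLabel d u (d - 1) (g.sec [x])
      else piLabel d u (i - 1) g

/-- The monomorphism `π_i : Aut(T) → Aut(T)`, satisfying
`π_0(g) = g|^ε · ψ₁⁻¹(π_{d-1}(g|_0), …, π_{d-1}(g|_{m-1}))` and
`π_i(g) = ψ₁⁻¹(π_{i-1}(g), …, π_{i-1}(g))` for `1 ≤ i ≤ d-1`. -/
def piAut (d i : ℕ) (g : TreeAut m) : TreeAut m := ⟨fun u => piLabel d u i g⟩

/-- The generator of the `m`-adic odometer: `a = σ · ψ₁⁻¹(a, 1, …, 1)` with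
`σ = (0 1 … m-1)`. -/
def odometer (m : ℕ) [NeZero m] : TreeAut m :=
  ⟨fun u => if ∀ x ∈ u, x = 0 then finRotate m else 1⟩

/-- The group `O_m^d = D_d(O_m) = ⟨π_i(a) : 0 ≤ i ≤ d-1⟩`. -/
def OdPow (m d : ℕ) [NeZero m] : Subgroup (TreeAut m) :=
  Subgroup.closure {x | ∃ i < d, x = piAut d i (odometer m)}

/-- The group `Γ` of all automorphisms all of whose labels are powers of the
cycle `σ = (0 1 … m-1)`. -/
def Gamma (m : ℕ) : Subgroup (TreeAut m) where
  carrier := {g | ∀ u : List (Fin m), g.label u ∈ Subgroup.zpowers (finRotate m)}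
  one_mem' := by
    intro u
    rw [TreeAut.one_label]
    exact one_mem _
  mul_mem' := by
    intro a b ha hb u
    rw [TreeAut.mul_label]
    exact mul_mem (ha _) (hb _)
  inv_mem' := by
    intro a ha u
    rw [TreeAut.inv_label]
    exact inv_mem (ha _)

/-- The Hausdorff dimension of `G ≤ Γ` relative to `Γ`. -/
noncomputable def hdim (m : ℕ) (G : Subgroup (TreeAut m)) : ℝ :=
  Filter.liminf (fun n : ℕ =>
    Real.logb m ((layerStab G n).relIndex G) /
      Real.logb m ((layerStab (Gamma m) n).relIndex (Gamma m))) Filter.atTop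

/-- The series of obstructions `o_G(n) = m·log_m|L_G(n-1)| - log_m|L_G(n)|` (for `n ≥ 1`),
where `L_G(n) = St_G(n)/St_G(n+1)`. -/
noncomputable def obstruction (m : ℕ) (G : Subgroup (TreeAut m)) (n : ℕ) : ℝ :=
  m * Real.logb m ((layerStab G n).relIndex (layerStab G (n - 1)))
    - Real.logb m ((layerStab G (n + 1)).relIndex (layerStab G n))

/-- The permutation group induced by `G` on the first layer acts regularly on `X`. -/
def RegularRootAction (G : Subgroup (TreeAut m)) : Prop :=
  (∀ x y : Fin m, ∃ g ∈ G, g.label [] x = y) ∧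
    ∀ g ∈ G, ∀ x : Fin m, g.label [] x = x → g.label [] = 1


section AuxProof

namespace TreeAut

lemma label_nil_mul (a b : TreeAut m) : (a * b).label [] = a.label [] * b.label [] := rfl

lemma apply_singleton (a : TreeAut m) (x : Fin m) : a.apply [x] = [a.label [] x] := rfl

lemma label_nil_inv (a : TreeAut m) : a⁻¹.label [] = (a.label [])⁻¹ := rfl

lemma mul_sec_single (a b : TreeAut m) (x : Fin m) :
    (a * b).sec [x] = a.sec [b.label [] x] * b.sec [x] := by
  rw [mul_sec, apply_singleton]

lemma inv_sec_single (a : TreeAut m) (x : Fin m) :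
    a⁻¹.sec [x] = (a.sec [(a.label [])⁻¹ x])⁻¹ := by
  have h := mul_sec a a⁻¹ [x]
  rw [mul_inv_cancel, one_sec, apply_singleton, label_nil_inv] at h
  exact eq_inv_of_mul_eq_one_right h.symm |>.symm ▸ (by
    rw [eq_comm, inv_eq_iff_mul_eq_one] ; exact (mul_eq_one_iff_inv_eq).2 rfl)

lemma ext1 {a b : TreeAut m} (h0 : a.label [] = b.label [])
    (h1 : ∀ x : Fin m, a.sec [x] = b.sec [x]) : a = b := by
  apply ext_label
  intro u
  cases u with
  | nil => exact h0
  | cons x v =>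
      have := congrArg (fun t : TreeAut m => t.label v) (h1 x)
      simpa using this

end TreeAut

end AuxProof
theorem _root_.Equiv.Perm.apply_inv_self {α : Type*} (f : Equiv.Perm α) (x : α) :
    f (f⁻¹ x) = x := f.apply_symm_apply x

theorem _root_.Equiv.Perm.inv_apply_self {α : Type*} (f : Equiv.Perm α) (x : α) :
    f⁻¹ (f x) = x := f.symm_apply_apply x

section BetaAux

variable [NeZero m]

lemma betaLabel_nil (s i : ℕ) (g : TreeAut m) :
    betaLabel s ([] : List (Fin m)) i g = if i = 0 then g.label [] else 1 := rfl

lemma betaLabel_cons (s i : ℕ) (x : Fin m) (u : List (Fin m)) (g : TreeAut m) :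
    betaLabel s (x :: u) i g =
      if i = 0 then betaLabel s u (s - 1) (g.sec [x])
      else if x = 0 then betaLabel s u (i - 1) g else 1 := rfl

lemma betaAut_label (s i : ℕ) (g : TreeAut m) (u : List (Fin m)) :
    (betaAut s i g).label u = betaLabel s u i g := rfl

lemma betaAut_label_nil_zero (s : ℕ) (g : TreeAut m) :
    (betaAut s 0 g).label [] = g.label [] := rfl

lemma betaAut_label_nil_succ (s i : ℕ) (g : TreeAut m) :
    (betaAut s (i + 1) g).label [] = 1 := rfl

lemma betaAut_sec_zero (s : ℕ) (g : TreeAut m) (x : Fin m) :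
    (betaAut s 0 g).sec [x] = betaAut s (s - 1) (g.sec [x]) :=
  TreeAut.ext_label fun u => rfl

lemma betaAut_sec_succ (s i : ℕ) (g : TreeAut m) (x : Fin m) :
    (betaAut s (i + 1) g).sec [x] = if x = 0 then betaAut s i g else 1 := by
  split_ifs with hx
  · subst hx
    exact TreeAut.ext_label fun u => by
      show betaLabel s (0 :: u) (i + 1) g = betaLabel s u i g
      rw [betaLabel_cons]
      simp
  · exact TreeAut.ext_label fun u => by
      show betaLabel s (x :: u) (i + 1) g = 1
      rw [betaLabel_cons]
      simp [hx]

lemma betaLabel_one (s : ℕ) (u : List (Fin m)) (i : ℕ) :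
    betaLabel s u i (1 : TreeAut m) = 1 := by
  induction u generalizing i with
  | nil => rw [betaLabel_nil]; split <;> rfl
  | cons x v ih =>
      rw [betaLabel_cons]
      split_ifs <;> simp [TreeAut.one_sec, ih]

lemma betaAut_one (s i : ℕ) : betaAut s i (1 : TreeAut m) = 1 :=
  TreeAut.ext_label fun u => betaLabel_one s u i

lemma betaLabel_mul (s : ℕ) (u : List (Fin m)) : ∀ (i : ℕ) (g h : TreeAut m),
    betaLabel s u i (g * h) =
      betaLabel s ((betaAut s i h).apply u) i g * betaLabel s u i h := by
  induction u with
  | nil =>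
      intro i g h
      cases i with
      | zero => simp [betaLabel_nil, TreeAut.label_nil_mul]
      | succ i => simp [betaLabel_nil]
  | cons x v ih =>
      intro i g h
      cases i with
      | zero =>
          simp only [TreeAut.apply_cons, betaAut_label_nil_zero, betaAut_sec_zero,
            betaLabel_cons, if_true, eq_self_iff_true, ite_true]
          rw [TreeAut.mul_sec_single, ih]
      | succ i =>
          simp only [TreeAut.apply_cons, betaAut_label_nil_succ, betaAut_sec_succ,
            betaLabel_cons, Nat.succ_ne_zero, if_false, ite_false, Nat.add_sub_cancel,
            Equiv.Perm.one_apply]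
          by_cases hx : x = 0
          · subst hx
            simp only [if_true, eq_self_iff_true, ite_true]
            rw [ih]
          · simp [hx]

lemma betaAut_mul (s i : ℕ) (g h : TreeAut m) :
    betaAut s i (g * h) = betaAut s i g * betaAut s i h :=
  TreeAut.ext_label fun u => by
    rw [TreeAut.mul_label]
    exact betaLabel_mul s u i g h

/-- `β_i` as a monoid hom. -/
def betaHom (s i : ℕ) : TreeAut m →* TreeAut m :=
  MonoidHom.mk' (betaAut s i) (betaAut_mul s i)

lemma betaHom_apply (s i : ℕ) (g : TreeAut m) : betaHom (m := m) s i g = betaAut s i g := rfl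

end BetaAux
section MemAux

variable [NeZero m]

lemma betaAut_mem_basilica {s i : ℕ} {G : Subgroup (TreeAut m)} (hi : i < s)
    {g : TreeAut m} (hg : g ∈ G) : betaAut s i g ∈ basilica s G :=
  Subgroup.subset_closure ⟨g, hg, i, hi, rfl⟩

lemma betaAut_mem_Ssub {s i j : ℕ} {G : Subgroup (TreeAut m)} (hj : j < s) (hji : j ≠ i)
    {g : TreeAut m} (hg : g ∈ G) : betaAut s j g ∈ Ssub s i G :=
  Subgroup.subset_closure ⟨g, hg, j, hj, hji, rfl⟩

lemma Ssub_le_Nsub (s i : ℕ) (G : Subgroup (TreeAut m)) : Ssub s i G ≤ Nsub s i G := by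
  refine (Subgroup.closure_le _).2 fun y hy => Subgroup.subset_closure ?_
  exact ⟨1, one_mem _, y, Subgroup.subset_closure hy, by group⟩

lemma Nsub_conj {s i : ℕ} {G : Subgroup (TreeAut m)} {b x : TreeAut m}
    (hb : b ∈ basilica s G) (hx : x ∈ Nsub s i G) : b * x * b⁻¹ ∈ Nsub s i G := by
  induction hx using Subgroup.closure_induction with
  | mem y hy =>
      obtain ⟨c, hc, z, hz, rfl⟩ := hy
      exact Subgroup.subset_closure ⟨b * c, mul_mem hb hc, z, hz, by group⟩
  | one => simpa using one_mem _
  | mul y z hy hz hy' hz' =>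
      have h : b * (y * z) * b⁻¹ = (b * y * b⁻¹) * (b * z * b⁻¹) := by group
      rw [h]; exact mul_mem hy' hz'
  | inv y hy hy' =>
      have h : b * y⁻¹ * b⁻¹ = (b * y * b⁻¹)⁻¹ := by group
      rw [h]; exact inv_mem hy'

end MemAux

section CommAux

variable [NeZero m]

lemma betaAut_label_nil_one (s : ℕ) (g : TreeAut m) : (betaAut s 1 g).label [] = 1 :=
  betaAut_label_nil_succ s 0 g

lemma betaAut_sec_one (s : ℕ) (g : TreeAut m) (x : Fin m) :
    (betaAut s 1 g).sec [x] = if x = 0 then betaAut s 0 g else 1 :=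
  betaAut_sec_succ s 0 g x

/-- The key commutator identity:
`[β₁w, β₁t] = β₁w · n · (β₁w)⁻¹ · n⁻¹` where `n = [β₁t, β₀k]`,
valid whenever `k` moves `0` at the root. -/
lemma commutator_eq (s : ℕ) (w t k : TreeAut m) (hk : k.label [] 0 ≠ 0) :
    betaAut s 1 w * betaAut s 1 t * (betaAut s 1 w)⁻¹ * (betaAut s 1 t)⁻¹ =
      betaAut s 1 w * (betaAut s 1 t * betaAut s 0 k * (betaAut s 1 t)⁻¹ * (betaAut s 0 k)⁻¹) *
        (betaAut s 1 w)⁻¹ *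
        (betaAut s 1 t * betaAut s 0 k * (betaAut s 1 t)⁻¹ * (betaAut s 0 k)⁻¹)⁻¹ := by
  have hk' : (k.label [])⁻¹ 0 ≠ 0 := fun h => hk (by
    conv_lhs => rw [← h]
    exact Equiv.Perm.apply_inv_self _ _)
  apply TreeAut.ext1
  · simp only [TreeAut.label_nil_mul, TreeAut.label_nil_inv, betaAut_label_nil_one,
      betaAut_label_nil_zero]
    group
  · intro x
    simp only [TreeAut.mul_sec_single, TreeAut.inv_sec_single, TreeAut.label_nil_mul,
      TreeAut.label_nil_inv, betaAut_label_nil_one, betaAut_label_nil_zero,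
      betaAut_sec_one, betaAut_sec_zero, one_mul, mul_one, inv_one,
      Equiv.Perm.one_apply, Equiv.Perm.mul_apply, Equiv.Perm.apply_inv_self,
      Equiv.Perm.inv_apply_self, TreeAut.one_sec, mul_inv_cancel]
    by_cases hx : x = 0
    · subst hx
      simp only [if_pos rfl, inv_one, Equiv.Perm.one_apply, if_neg hk', TreeAut.one_sec,
        one_mul, mul_one]
      group
    · by_cases hx' : x = k.label [] 0
      · subst hx'
        simp only [if_neg hk, inv_one, Equiv.Perm.one_apply, Equiv.Perm.inv_apply_self,
          if_pos rfl, TreeAut.one_sec, one_mul, mul_one]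
        group
      · have h1 : (k.label [])⁻¹ x ≠ 0 := fun h => hx' (by
          conv_lhs => rw [← Equiv.Perm.apply_inv_self (k.label []) x, h])
        simp only [if_neg hx, inv_one, Equiv.Perm.one_apply, if_neg h1, TreeAut.one_sec,
          one_mul, mul_one]
        group

end CommAux
section AbelAux

variable [NeZero m]

lemma commutator_mem_Nsub {s : ℕ} (hs : 1 < s) {G : Subgroup (TreeAut m)}
    {g h k : TreeAut m} (hg : g ∈ G) (hh : h ∈ G) (hkG : k ∈ G)
    (hk : k.label [] 0 ≠ 0) :
    betaAut s 1 (g * h * g⁻¹ * h⁻¹) ∈ Nsub s 1 G := by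
  have hB1g : betaAut s 1 g ∈ basilica s G := betaAut_mem_basilica hs hg
  have hB1h : betaAut s 1 h ∈ basilica s G := betaAut_mem_basilica hs hh
  have h0k : betaAut s 0 k ∈ Ssub s 1 G :=
    betaAut_mem_Ssub (Nat.lt_of_lt_of_le Nat.one_pos hs.le) (by omega) hkG
  have hn : betaAut s 1 h * betaAut s 0 k * (betaAut s 1 h)⁻¹ * (betaAut s 0 k)⁻¹ ∈
      Nsub s 1 G := by
    refine mul_mem ?_ (inv_mem (Ssub_le_Nsub s 1 G h0k))
    exact Subgroup.subset_closure ⟨betaAut s 1 h, hB1h, betaAut s 0 k, h0k, rfl⟩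
  have hq : betaAut s 1 g *
      (betaAut s 1 h * betaAut s 0 k * (betaAut s 1 h)⁻¹ * (betaAut s 0 k)⁻¹) *
      (betaAut s 1 g)⁻¹ *
      (betaAut s 1 h * betaAut s 0 k * (betaAut s 1 h)⁻¹ * (betaAut s 0 k)⁻¹)⁻¹ ∈
      Nsub s 1 G :=
    mul_mem (Nsub_conj hB1g hn) (inv_mem hn)
  have e : betaAut s 1 (g * h * g⁻¹ * h⁻¹) =
      betaAut s 1 g * betaAut s 1 h * (betaAut s 1 g)⁻¹ * (betaAut s 1 h)⁻¹ := by
    simp only [show ∀ a : TreeAut m, betaAut s 1 a = betaHom (m := m) s 1 a from fun _ => rfl,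
      map_mul, map_inv]
  rw [e, commutator_eq s g h k hk]
  exact hq

lemma G_mul_comm (hm : 2 ≤ m) {s : ℕ} (hs : 1 < s) {G : Subgroup (TreeAut m)}
    (htrans : SphericallyTransitive G)
    (hsplit : ∀ i < s, ∀ g ∈ Kset s i G, g = 1) :
    ∀ g ∈ G, ∀ h ∈ G, g * h = h * g := by
  obtain ⟨k, hkG, hk⟩ := htrans [0] [1] rfl
  have hk0 : k.label [] 0 ≠ 0 := by
    have h1 : k.apply [0] = [k.label [] 0] := TreeAut.apply_singleton k 0
    rw [hk] at h1
    have h2 : k.label [] 0 = 1 := by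
      injection h1 with h2 _
      exact h2.symm
    rw [h2]
    intro h3
    have : (1 : Fin m).val = (0 : Fin m).val := congrArg Fin.val h3
    rw [Fin.val_one', Fin.val_zero, Nat.mod_eq_of_lt hm] at this
    exact one_ne_zero this
  intro g hg h hh
  have hmem : g * h * g⁻¹ * h⁻¹ ∈ Kset s 1 G :=
    ⟨mul_mem (mul_mem (mul_mem hg hh) (inv_mem hg)) (inv_mem hh),
      commutator_mem_Nsub hs hg hh hkG hk0⟩
  have h1 : g * h * g⁻¹ * h⁻¹ = 1 := hsplit 1 hs _ hmem
  have h2 : g * h * g⁻¹ = h := by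
    have := mul_inv_eq_one.mp h1
    exact this
  calc g * h = g * h * g⁻¹ * g := by group
    _ = h * g := by rw [h2]

end AbelAux

/-- Let `s > 1` and let `G ≤ Aut(T)` be an `s`-split, self-similar
group acting spherically transitively. Then `Bas_s(G)^{ab} ≅ G^s`. -/
theorem basilica_abelianization {m : ℕ} [NeZero m] (hm : 2 ≤ m)
    (s : ℕ) (hs : 1 < s) (G : Subgroup (TreeAut m))
    (hss : SelfSimilar G) (htrans : SphericallyTransitive G)
    (hsplit : ∀ i < s, ∀ g ∈ Kset s i G, g = 1) :
    Nonempty (Abelianization ↥(basilica s G) ≃* (Fin s → ↥G)) := by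
  classical
  have habel : ∀ g h : ↥G, g * h = h * g := fun g h =>
    Subtype.ext (G_mul_comm hm hs htrans hsplit g.1 g.2 h.1 h.2)
  letI : CommGroup ↥G := { (inferInstance : Group ↥G) with mul_comm := habel }
  -- the Basilica generators as homs into the Basilica group
  let bb : Fin s → (↥G →* ↥(basilica s G)) := fun i =>
    MonoidHom.mk' (fun g => ⟨betaAut s i.1 g.1, betaAut_mem_basilica i.isLt g.2⟩)
      (fun g h => Subtype.ext (betaAut_mul s i.1 g.1 h.1))
  -- for each i, a retraction of the Basilica group onto the i-th copy of G
  have key : ∀ i : Fin s, ∃ φ : ↥(basilica s G) →* ↥G,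
      (∀ g : ↥G, φ (bb i g) = g) ∧ ∀ j : Fin s, j ≠ i → ∀ g : ↥G, φ (bb j g) = 1 := by
    intro i
    set Ni : Subgroup ↥(basilica s G) :=
      (Nsub s i.1 G).subgroupOf (basilica s G) with hNidef
    haveI hNn : Ni.Normal := by
      constructor
      intro n hn b
      exact Subgroup.mem_subgroupOf.mpr
        (Nsub_conj b.2 (Subgroup.mem_subgroupOf.mp hn))
    set q : ↥(basilica s G) →* ↥(basilica s G) ⧸ Ni := QuotientGroup.mk' Ni with hqdef
    have hker : ∀ b : ↥(basilica s G),
        q b = 1 ↔ (b : TreeAut m) ∈ Nsub s i.1 G := fun b =>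
      (QuotientGroup.eq_one_iff b).trans Subgroup.mem_subgroupOf
    have hinj : Function.Injective (q.comp (bb i)) := by
      rw [injective_iff_map_eq_one]
      intro g hg1
      have h1 : betaAut s i.1 g.1 ∈ Nsub s i.1 G := (hker _).mp hg1
      exact Subtype.ext (hsplit i.1 i.isLt _ ⟨g.2, h1⟩)
    have hsurj : Function.Surjective (q.comp (bb i)) := by
      intro y
      obtain ⟨b, rfl⟩ := QuotientGroup.mk'_surjective Ni y
      suffices h : ∀ (x : TreeAut m) (hx : x ∈ basilica s G),
          ∃ g : ↥G, (q.comp (bb i)) g = q ⟨x, hx⟩ by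
        obtain ⟨g, hg⟩ := h b.1 b.2
        exact ⟨g, hg.trans (congrArg q (Subtype.ext rfl))⟩
      intro x hx
      induction hx using Subgroup.closure_induction with
      | mem y hy =>
          obtain ⟨g0, hg0, j, hjs, rfl⟩ := hy
          by_cases hji : j = i.1
          · subst hji
            exact ⟨⟨g0, hg0⟩, congrArg q (Subtype.ext rfl)⟩
          · refine ⟨1, ?_⟩
            rw [map_one]
            exact ((hker _).mpr
              (Ssub_le_Nsub s i.1 G (betaAut_mem_Ssub hjs hji hg0))).symm
      | one =>
          exact ⟨1, by
            rw [map_one]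
            exact ((map_one q).symm.trans (congrArg q (Subtype.ext rfl)))⟩
      | mul a c ha hc iha ihc =>
          obtain ⟨ga, hga⟩ := iha
          obtain ⟨gc, hgc⟩ := ihc
          exact ⟨ga * gc, by
            rw [map_mul, hga, hgc, ← map_mul]
            exact congrArg q (Subtype.ext rfl)⟩
      | inv a ha iha =>
          obtain ⟨ga, hga⟩ := iha
          exact ⟨ga⁻¹, by
            rw [map_inv, hga, ← map_inv]
            exact congrArg q (Subtype.ext rfl)⟩
    set e : ↥G ≃* (↥(basilica s G) ⧸ Ni) :=
      MulEquiv.ofBijective (q.comp (bb i)) ⟨hinj, hsurj⟩ with hedef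
    refine ⟨e.symm.toMonoidHom.comp q, fun g => ?_, fun j hji g => ?_⟩
    · show e.symm (q (bb i g)) = g
      have : q (bb i g) = e g := rfl
      rw [this, MulEquiv.symm_apply_apply]
    · show e.symm (q (bb j g)) = 1
      have h1 : q (bb j g) = 1 := (hker _).mpr
        (Ssub_le_Nsub s i.1 G
          (betaAut_mem_Ssub j.isLt (fun hc => hji (Fin.ext hc)) g.2))
      rw [h1, map_one]
  choose φ hφ1 hφ2 using key
  let Φ : ↥(basilica s G) →* (Fin s → ↥G) :=
    { toFun := fun b i => φ i b
      map_one' := funext fun i => map_one (φ i)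
      map_mul' := fun a b => funext fun i => map_mul (φ i) a b }
  have keysingle : ∀ (j : Fin s) (g : ↥G), Φ (bb j g) = Pi.mulSingle j g := by
    intro j g
    funext i
    by_cases h : i = j
    · subst h
      rw [Pi.mulSingle_eq_same]
      exact hφ1 i g
    · rw [Pi.mulSingle_eq_of_ne h]
      exact hφ2 i j (fun hji => h hji.symm) g
  let Ψ : (Fin s → ↥G) →* Abelianization ↥(basilica s G) :=
    { toFun := fun f => ∏ i : Fin s, Abelianization.of (bb i (f i))
      map_one' := by simp
      map_mul' := fun f g => by
        show (∏ i : Fin s, Abelianization.of (bb i ((f * g) i)))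
            = (∏ i : Fin s, Abelianization.of (bb i (f i)))
              * ∏ i : Fin s, Abelianization.of (bb i (g i))
        rw [← Finset.prod_mul_distrib]
        exact Finset.prod_congr rfl fun i _ => by rw [Pi.mul_apply, map_mul, map_mul] }
  have hΨsingle : ∀ (j : Fin s) (g : ↥G), Ψ (Pi.mulSingle j g) = Abelianization.of (bb j g) := by
    intro j g
    have h1 : (∏ i : Fin s, Abelianization.of (bb i (Pi.mulSingle (M := fun _ => ↥G) j g i)))
        = Abelianization.of (bb j (Pi.mulSingle (M := fun _ => ↥G) j g j)) :=
      Fintype.prod_eq_single j fun i hi => by rw [Pi.mulSingle_eq_of_ne hi, map_one, map_one]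
    rw [Pi.mulSingle_eq_same] at h1
    exact h1
  have hright : ∀ f : Fin s → ↥G, Abelianization.lift Φ (Ψ f) = f := by
    intro f
    show Abelianization.lift Φ (∏ i : Fin s, Abelianization.of (bb i (f i))) = f
    rw [map_prod]
    calc (∏ i : Fin s, Abelianization.lift Φ (Abelianization.of (bb i (f i))))
        = ∏ i : Fin s, Pi.mulSingle i (f i) :=
          Finset.prod_congr rfl fun i _ => by
            rw [Abelianization.lift_apply_of]; exact keysingle i (f i)
      _ = f := Finset.univ_prod_mulSingle f
  have hleft : ∀ a : Abelianization ↥(basilica s G),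
      Ψ (Abelianization.lift Φ a) = a := by
    have hof : ∀ b : ↥(basilica s G),
        Ψ (Abelianization.lift Φ (Abelianization.of b)) = Abelianization.of b := by
      intro b
      rw [Abelianization.lift_apply_of]
      suffices h : ∀ (x : TreeAut m) (hx : x ∈ basilica s G),
          Ψ (Φ ⟨x, hx⟩) = Abelianization.of ⟨x, hx⟩ by
        have := h b.1 b.2
        simpa using this
      intro x hx
      induction hx using Subgroup.closure_induction with
      | mem y hy =>
          obtain ⟨g0, hg0, j, hjs, rfl⟩ := hy
          have hbb : (⟨betaAut s j g0, Subgroup.subset_closure ⟨g0, hg0, j, hjs, rfl⟩⟩ :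
              ↥(basilica s G)) = bb ⟨j, hjs⟩ ⟨g0, hg0⟩ := Subtype.ext rfl
          rw [hbb, keysingle, hΨsingle]
      | one =>
          have h1 : (⟨(1 : TreeAut m), one_mem _⟩ : ↥(basilica s G)) = 1 := Subtype.ext rfl
          rw [h1, map_one, map_one, map_one]
      | mul a c ha hc iha ihc =>
          have h1 : (⟨a * c, mul_mem ha hc⟩ : ↥(basilica s G)) = ⟨a, ha⟩ * ⟨c, hc⟩ :=
            Subtype.ext rfl
          rw [h1, map_mul, map_mul, iha, ihc, map_mul]
      | inv a ha iha =>
          have h1 : (⟨a⁻¹, inv_mem ha⟩ : ↥(basilica s G)) = (⟨a, ha⟩ : ↥(basilica s G))⁻¹ :=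
            Subtype.ext rfl
          rw [h1, map_inv, map_inv, iha, map_inv]
    intro a
    refine Quotient.inductionOn' a fun b => ?_
    exact hof b
  exact ⟨{ toFun := Abelianization.lift Φ
           invFun := Ψ
           left_inv := hleft
           right_inv := hright
           map_mul' := map_mul (Abelianization.lift Φ) }⟩

end Basilica
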